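/- (Super-hedge theorem) Let S* be a positive continuous semimartingale, and let (X,Y) be the G3M reserve processes with fee τ ∈ (0,1) satisfying: X = Xᶜ + Σ_{s≤t}ΔX_s, Y = Yᶜ + Σ_{s≤t}ΔY_s with Xᶜ = X₀ + X↑ - X↓, Yᶜ = Y₀ + Y↑ - Y↓ continuous nondecreasing, dY↓ = B dX↑, dY↑ = A dX↓, X↑ (resp. X↓) increasing only on {B = S*} (resp. {A = S*}), B = (1-τ)βY/X, A = βY/((1-τ)X), the no-arbitrage bound B₋ ≤ S* ≤ A₋ holding at jump times, and each jump satisfying (X₋+(1-τH(ΔX))ΔX)^α(Y₋+(1-τH(ΔY))ΔY)^{1-α} ≥ X₋^α Y₋^{1-α}. Then the pool value V = Y + XS* satisfies V_T ≥ V₀ + ∫₀^T X_t dS*_t for all T ≥ 0, with equality when there are no jumps. -/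

import Mathlib

open MeasureTheory

/-- The Heaviside function. -/
noncomputable def heaviside (z : ℝ) : ℝ := if 0 < z then 1 else 0

set_option maxHeartbeats 1000000

lemma fin_telescope {M : Type*} [AddCommGroup M] : ∀ (n : ℕ) (g : Fin (n+1) → M),
    ∑ i : Fin n, (g i.succ - g i.castSucc) = g (Fin.last n) - g 0 := by
  intro n
  induction n with
  | zero => intro g; simp
  | succ n ih =>
    intro g
    rw [Fin.sum_univ_castSucc]
    have h := ih (fun i => g i.castSucc)
    simp only [Fin.succ_castSucc] at h ⊢
    rw [h]
    simp [Fin.succ_last]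
    try abel

lemma sum_filter_Ioc (J : Finset ℝ) (h : ℝ → ℝ) {a b : ℝ} (hab : a ≤ b) :
    ∑ s ∈ J.filter (fun s => s ∈ Set.Ioc a b), h s
      = (∑ s ∈ J.filter (fun s => s ≤ b), h s) - ∑ s ∈ J.filter (fun s => s ≤ a), h s := by
  have key := Finset.sum_filter_add_sum_filter_not (J.filter (fun s => s ≤ b))
    (fun s => s ≤ a) h
  rw [Finset.filter_filter, Finset.filter_filter] at key
  have e1 : J.filter (fun s => s ≤ b ∧ s ≤ a) = J.filter (fun s => s ≤ a) :=
    Finset.filter_congr fun s _ => ⟨fun h' => h'.2, fun h' => ⟨h'.trans hab, h'⟩⟩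
  have e2 : J.filter (fun s => s ≤ b ∧ ¬ s ≤ a) = J.filter (fun s => s ∈ Set.Ioc a b) :=
    Finset.filter_congr fun s _ => by
      simp only [Set.mem_Ioc, not_le]
      exact ⟨fun h' => ⟨h'.2, h'.1⟩, fun h' => ⟨h'.2, h'.1⟩⟩
  rw [e1, e2] at key
  linarith

lemma stieltjes_riemann (F G : StieltjesFunction ℝ) (Bf S : ℝ → ℝ) (hSm : Measurable S)
    (hd : G.measure = F.measure.withDensity fun t => ENNReal.ofReal (Bf t))
    (hsupp : F.measure {t | Bf t ≠ S t} = 0)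
    {a b c ε : ℝ} (hab : a ≤ b) (hc : 0 < c) (hε : 0 ≤ ε)
    (hS : ∀ x ∈ Set.Ioc a b, |S x - c| ≤ ε) :
    |c * (F b - F a) - (G b - G a)| ≤ ε * (F b - F a) := by
  have hFd : 0 ≤ F b - F a := sub_nonneg.2 (F.mono hab)
  have hGd : 0 ≤ G b - G a := sub_nonneg.2 (G.mono hab)
  have hFm : F.measure (Set.Ioc a b) = ENNReal.ofReal (F b - F a) := F.measure_Ioc a b
  have hae : (fun t => ENNReal.ofReal (Bf t)) =ᵐ[F.measure.restrict (Set.Ioc a b)]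
      fun t => ENNReal.ofReal (S t) := by
    refine ae_restrict_of_ae ?_
    have : ∀ᵐ t ∂F.measure, Bf t = S t := by
      rw [MeasureTheory.ae_iff]; simpa using hsupp
    filter_upwards [this] with t ht using by rw [ht]
  have hGm : ENNReal.ofReal (G b - G a)
      = ∫⁻ x in Set.Ioc a b, ENNReal.ofReal (S x) ∂F.measure := by
    rw [← G.measure_Ioc, hd, withDensity_apply _ measurableSet_Ioc,
      lintegral_congr_ae hae]
  have hup : ∫⁻ x in Set.Ioc a b, ENNReal.ofReal (S x) ∂F.measure
      ≤ ENNReal.ofReal ((c + ε) * (F b - F a)) := by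
    calc ∫⁻ x in Set.Ioc a b, ENNReal.ofReal (S x) ∂F.measure
        ≤ ∫⁻ _ in Set.Ioc a b, ENNReal.ofReal (c + ε) ∂F.measure := by
          refine setLIntegral_mono measurable_const fun x hx => ?_
          exact ENNReal.ofReal_le_ofReal (by have := abs_le.1 (hS x hx); linarith)
      _ = ENNReal.ofReal (c + ε) * F.measure (Set.Ioc a b) := setLIntegral_const _ _
      _ = ENNReal.ofReal ((c + ε) * (F b - F a)) := by
          rw [hFm, ← ENNReal.ofReal_mul (by linarith)]
  have hub : G b - G a ≤ (c + ε) * (F b - F a) := by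
    have := hGm ▸ hup
    rwa [ENNReal.ofReal_le_ofReal_iff (by positivity)] at this
  have hlb : (c - ε) * (F b - F a) ≤ G b - G a := by
    rcases le_or_gt (c - ε) 0 with h0 | h0
    · nlinarith
    · have hlow : ENNReal.ofReal ((c - ε) * (F b - F a))
          ≤ ∫⁻ x in Set.Ioc a b, ENNReal.ofReal (S x) ∂F.measure := by
        calc ENNReal.ofReal ((c - ε) * (F b - F a))
            = ∫⁻ _ in Set.Ioc a b, ENNReal.ofReal (c - ε) ∂F.measure := by
              rw [setLIntegral_const, hFm, ← ENNReal.ofReal_mul h0.le]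
          _ ≤ ∫⁻ x in Set.Ioc a b, ENNReal.ofReal (S x) ∂F.measure := by
              refine setLIntegral_mono (hSm.ennreal_ofReal) fun x hx => ?_
              exact ENNReal.ofReal_le_ofReal (by have := abs_le.1 (hS x hx); linarith)
      rw [← hGm] at hlow
      rwa [ENNReal.ofReal_le_ofReal_iff hGd] at hlow
  rw [abs_le]
  constructor <;> nlinarith

lemma jump_ineq (α τ β x y a b S : ℝ) (hα : α ∈ Set.Ioo (0:ℝ) 1) (hτ : τ ∈ Set.Ioo (0:ℝ) 1)
    (hβ : β = α/(1-α)) (hx : 0 < x) (hy : 0 < y) (hxa : 0 < x + a) (hyb : 0 < y + b)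
    (hab : a*b ≤ 0)
    (hBle : (1-τ)*β*y/x ≤ S) (hAle : S ≤ β*y/((1-τ)*x))
    (htrade : x^α * y^(1-α) ≤ (x + (1-τ*heaviside a)*a)^α * (y + (1-τ*heaviside b)*b)^(1-α)) :
    0 ≤ b + S * a := by
  obtain ⟨hα0, hα1⟩ := hα
  obtain ⟨hτ0, hτ1⟩ := hτ
  have hτ' : 0 < 1 - τ := by linarith
  set x' := x + (1-τ*heaviside a)*a with hx'
  set y' := y + (1-τ*heaviside b)*b with hy'
  have hx'pos : 0 < x' := by
    rw [hx', heaviside]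
    split_ifs with h
    · nlinarith
    · push_neg at h
      nlinarith
  have hy'pos : 0 < y' := by
    rw [hy', heaviside]
    split_ifs with h
    · nlinarith
    · push_neg at h
      nlinarith
  have hgm : (x'/x)^α * (y'/y)^(1-α) ≤ α * (x'/x) + (1-α) * (y'/y) :=
    Real.geom_mean_le_arith_mean2_weighted hα0.le (by linarith)
      (by positivity) (by positivity) (by ring)
  have hsplit : x'^α * y'^(1-α) = (x^α * y^(1-α)) * ((x'/x)^α * (y'/y)^(1-α)) := by
    have e1 : x'^α = x^α * (x'/x)^α := by
      rw [← Real.mul_rpow hx.le (by positivity), mul_div_cancel₀ _ hx.ne']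
    have e2 : y'^(1-α) = y^(1-α) * (y'/y)^(1-α) := by
      rw [← Real.mul_rpow hy.le (by positivity), mul_div_cancel₀ _ hy.ne']
    rw [e1, e2]; ring
  have hK : 0 < x^α * y^(1-α) := by positivity
  have hone : 1 ≤ α * (x'/x) + (1-α) * (y'/y) := by
    have h2 : x^α * y^(1-α) ≤ (x^α * y^(1-α)) * (α * (x'/x) + (1-α) * (y'/y)) := by
      calc x^α * y^(1-α) ≤ x'^α * y'^(1-α) := htrade
        _ = (x^α * y^(1-α)) * ((x'/x)^α * (y'/y)^(1-α)) := hsplit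
        _ ≤ (x^α * y^(1-α)) * (α * (x'/x) + (1-α) * (y'/y)) := by
            exact mul_le_mul_of_nonneg_left hgm hK.le
    nlinarith
  have hmaster : 0 ≤ β*y*((1-τ*heaviside a)*a) + ((1-τ*heaviside b)*b)*x := by
    have h3 : 0 ≤ α * (x' - x)/x + (1-α) * (y' - y)/y := by
      have : α * (x'/x) + (1-α) * (y'/y) - 1 = α * (x'-x)/x + (1-α)*(y'-y)/y := by
        field_simp
        try ring
      linarith [this ▸ sub_nonneg.2 hone]
    have h4 : 0 ≤ α * (x' - x) * y + (1-α) * (y' - y) * x := by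
      have := mul_nonneg h3 (mul_pos hx hy).le
      have e : (α * (x' - x)/x + (1-α) * (y' - y)/y) * (x*y)
          = α * (x' - x) * y + (1-α) * (y' - y) * x := by field_simp; try ring
      linarith [e ▸ this]
    have hβpos : 0 < 1 - α := by linarith
    have e2 : β*y*((1-τ*heaviside a)*a) + ((1-τ*heaviside b)*b)*x
        = (α * (x' - x) * y + (1-α) * (y' - y) * x) / (1-α) := by
      rw [hβ, hx', hy']; field_simp
      try ring
    rw [e2]
    positivity
  rcases mul_nonpos_iff.1 hab with ⟨ha, hb⟩ | ⟨ha, hb⟩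
  · have hHa : (1 - τ*heaviside a)*a = (1-τ)*a := by
      rw [heaviside]; split_ifs with h
      · ring
      · have : a = 0 := le_antisymm (not_lt.1 h) ha
        rw [this]; ring
    have hHb : heaviside b = 0 := by rw [heaviside]; exact if_neg (not_lt.2 (by linarith))
    rw [hHa, hHb] at hmaster
    have hB2 : (1-τ)*β*y ≤ S * x := by
      have := (div_le_iff₀ hx).1 hBle
      linarith
    have h5 : 0 ≤ x*(b + S*a) := by
      have hint := mul_le_mul_of_nonneg_right hB2 ha
      linarith [hint]
    exact le_of_mul_le_mul_left (by linarith) hx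
  · have hHb : (1 - τ*heaviside b)*b = (1-τ)*b := by
      rw [heaviside]; split_ifs with h
      · ring
      · have : b = 0 := le_antisymm (not_lt.1 h) hb
        rw [this]; ring
    have hHa : heaviside a = 0 := by rw [heaviside]; exact if_neg (not_lt.2 (by linarith))
    rw [hHa, hHb] at hmaster
    have hA2 : S * ((1-τ)*x) ≤ β*y := by
      have := (le_div_iff₀ (by positivity)).1 hAle
      linarith
    have h5 : 0 ≤ (1-τ)*x*(b + S*a) := by
      have hint := mul_le_mul_of_nonpos_right hA2 ha
      linarith [hint]
    exact le_of_mul_le_mul_left (by linarith) (mul_pos hτ' hx)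


/-- **Super-hedge theorem.** Let `S*` be a positive continuous (pathwise) price, and let
`(X,Y)` be the G3M reserve processes with fee `τ ∈ (0,1)`: continuous nondecreasing parts
`X↑, X↓, Y↑, Y↓` (Stieltjes functions) with `dY↓ = B dX↑`, `dY↑ = A dX↓`, `X↑` (resp. `X↓`)
increasing only on `{B = S*}` (resp. `{A = S*}`), where `B = (1-τ)βY/X`,
`A = βY/((1-τ)X)`, plus finitely many jumps at times in `J` satisfying the no-arbitrage
bound `B₋ ≤ S* ≤ A₋` and the trading-function inequality. If `I` is the (pathwise) integral
`∫₀^T X dS*`, defined as the limit of left-endpoint Riemann sums, then the pool value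
`V = Y + X·S*` satisfies `V_T ≥ V_0 + I`, with equality when there are no jumps. -/
theorem stmt_16
    (α τ β x₀ y₀ T : ℝ)
    (hα : α ∈ Set.Ioo (0 : ℝ) 1) (hτ : τ ∈ Set.Ioo (0 : ℝ) 1)
    (hβ : β = α / (1 - α)) (hx₀ : 0 < x₀) (hy₀ : 0 < y₀) (hT : 0 ≤ T)
    (Sstar : ℝ → ℝ) (hScont : Continuous Sstar) (hSpos : ∀ t, 0 < Sstar t)
    (Xup Xdown Yup Ydown : StieltjesFunction ℝ)
    (hXupc : Continuous fun t => Xup t) (hXdownc : Continuous fun t => Xdown t)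
    (hYupc : Continuous fun t => Yup t) (hYdownc : Continuous fun t => Ydown t)
    (hXup0 : ∀ t ≤ (0 : ℝ), Xup t = 0) (hXdown0 : ∀ t ≤ (0 : ℝ), Xdown t = 0)
    (hYup0 : ∀ t ≤ (0 : ℝ), Yup t = 0) (hYdown0 : ∀ t ≤ (0 : ℝ), Ydown t = 0)
    (J : Finset ℝ) (hJ : ↑J ⊆ Set.Ioc 0 T)
    (Δx Δy : ℝ → ℝ)
    (X Y Xleft Yleft B A : ℝ → ℝ)
    (hX : ∀ t, X t = x₀ + Xup t - Xdown t + ∑ s ∈ J.filter (· ≤ t), Δx s)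
    (hY : ∀ t, Y t = y₀ + Yup t - Ydown t + ∑ s ∈ J.filter (· ≤ t), Δy s)
    (hXleft : ∀ t, Xleft t = x₀ + Xup t - Xdown t + ∑ s ∈ J.filter (· < t), Δx s)
    (hYleft : ∀ t, Yleft t = y₀ + Yup t - Ydown t + ∑ s ∈ J.filter (· < t), Δy s)
    (hXpos : ∀ t, 0 < X t) (hYpos : ∀ t, 0 < Y t)
    (hXleftpos : ∀ t, 0 < Xleft t) (hYleftpos : ∀ t, 0 < Yleft t)
    (hB : ∀ t, B t = (1 - τ) * β * Y t / X t)
    (hA : ∀ t, A t = β * Y t / ((1 - τ) * X t))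
    (hYd : Ydown.measure = Xup.measure.withDensity fun t => ENNReal.ofReal (B t))
    (hYu : Yup.measure = Xdown.measure.withDensity fun t => ENNReal.ofReal (A t))
    (hXupsupp : Xup.measure {t | B t ≠ Sstar t} = 0)
    (hXdownsupp : Xdown.measure {t | A t ≠ Sstar t} = 0)
    (hNAjump : ∀ s ∈ J,
      (1 - τ) * β * Yleft s / Xleft s ≤ Sstar s ∧
      Sstar s ≤ β * Yleft s / ((1 - τ) * Xleft s))
    (hjump : ∀ s ∈ J, Δx s * Δy s ≤ 0 ∧
      (Xleft s) ^ α * (Yleft s) ^ (1 - α) ≤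
        (Xleft s + (1 - τ * heaviside (Δx s)) * Δx s) ^ α *
          (Yleft s + (1 - τ * heaviside (Δy s)) * Δy s) ^ (1 - α))
    (I : ℝ)
    (hI : ∀ ε > 0, ∃ δ > 0, ∀ n : ℕ, ∀ t : Fin (n + 1) → ℝ,
      Monotone t → t 0 = 0 → t (Fin.last n) = T →
      (∀ i : Fin n, t i.succ - t i.castSucc < δ) →
      |(∑ i : Fin n, X (t i.castSucc) * (Sstar (t i.succ) - Sstar (t i.castSucc))) - I| < ε) :
    Y 0 + X 0 * Sstar 0 + I ≤ Y T + X T * Sstar T ∧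
      (J = ∅ → Y T + X T * Sstar T = Y 0 + X 0 * Sstar 0 + I) := by
  have hτ' : (0:ℝ) < 1 - τ := by linarith [hτ.2]
  have hXup0' : Xup 0 = 0 := hXup0 0 le_rfl
  have hXdown0' : Xdown 0 = 0 := hXdown0 0 le_rfl
  have hYup0' : Yup 0 = 0 := hYup0 0 le_rfl
  have hYdown0' : Ydown 0 = 0 := hYdown0 0 le_rfl
  have hJT : J.filter (· ≤ T) = J :=
    Finset.filter_true_of_mem fun s hs => (hJ (Finset.mem_coe.2 hs)).2
  have hJ0 : J.filter (· ≤ (0:ℝ)) = ∅ :=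
    Finset.filter_false_of_mem fun s hs => not_le.2 (hJ (Finset.mem_coe.2 hs)).1
  have hXupTnn : 0 ≤ Xup T := by rw [← hXup0']; exact Xup.mono hT
  have hXdownTnn : 0 ≤ Xdown T := by rw [← hXdown0']; exact Xdown.mono hT
  have hJnn : 0 ≤ ∑ s ∈ J, |Δx s| := Finset.sum_nonneg fun s _ => abs_nonneg _
  set C : ℝ := Xup T + Xdown T + (∑ s ∈ J, |Δx s|) + 1 with hC
  have hCpos : 0 < C := by rw [hC]; linarith
  set Lx : ℝ := X T * Sstar T - X 0 * Sstar 0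
    - (Ydown T - Yup T + ∑ s ∈ J, Sstar s * Δx s) with hLx
  -- the key per-partition estimate
  have key : ∀ ε : ℝ, 0 < ε → ∃ δ > 0, ∀ n : ℕ, ∀ t : Fin (n + 1) → ℝ,
      Monotone t → t 0 = 0 → t (Fin.last n) = T →
      (∀ i : Fin n, t i.succ - t i.castSucc < δ) →
      |(∑ i : Fin n, X (t i.castSucc) * (Sstar (t i.succ) - Sstar (t i.castSucc))) - Lx|
        ≤ ε := by
    intro ε hε
    have hε' : 0 < ε / C := div_pos hε hCpos
    obtain ⟨δ, hδpos, hδ⟩ := Metric.uniformContinuousOn_iff.1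
      ((isCompact_Icc : IsCompact (Set.Icc (0:ℝ) T)).uniformContinuousOn_of_continuous
        hScont.continuousOn) (ε / C) hε'
    refine ⟨δ, hδpos, ?_⟩
    intro n t hmono ht0 htT hmesh
    have htmem : ∀ j, t j ∈ Set.Icc (0:ℝ) T := fun j =>
      ⟨ht0 ▸ hmono (Fin.zero_le j), htT ▸ hmono (Fin.le_last j)⟩
    have hle : ∀ i : Fin n, t i.castSucc ≤ t i.succ :=
      fun i => hmono (Fin.castSucc_lt_succ (i := i)).le
    have hclose : ∀ i : Fin n, ∀ x ∈ Set.Ioc (t i.castSucc) (t i.succ),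
        |Sstar x - Sstar (t i.succ)| ≤ ε / C := by
      intro i x hx
      have hx0 : (0:ℝ) ≤ x := le_trans (htmem i.castSucc).1 hx.1.le
      have hxT : x ≤ T := le_trans hx.2 (htmem i.succ).2
      have hdist : dist x (t i.succ) < δ := by
        rw [Real.dist_eq, abs_of_nonpos (sub_nonpos.2 hx.2)]
        have := hmesh i
        linarith [hx.1]
      have h := hδ x ⟨hx0, hxT⟩ (t i.succ) (htmem i.succ) hdist
      rw [Real.dist_eq] at h
      exact h.le
    -- Abel summation
    have htelV : ∑ i : Fin n, (X (t i.succ) * Sstar (t i.succ)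
          - X (t i.castSucc) * Sstar (t i.castSucc))
        = X (t (Fin.last n)) * Sstar (t (Fin.last n)) - X (t 0) * Sstar (t 0) :=
      fin_telescope n fun j => X (t j) * Sstar (t j)
    rw [ht0, htT] at htelV
    have habel : (∑ i : Fin n, X (t i.castSucc) * (Sstar (t i.succ) - Sstar (t i.castSucc)))
        = X T * Sstar T - X 0 * Sstar 0
          - ∑ i : Fin n, Sstar (t i.succ) * (X (t i.succ) - X (t i.castSucc)) := by
      have h2 : ∑ i : Fin n, (X (t i.castSucc) * (Sstar (t i.succ) - Sstar (t i.castSucc))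
            + Sstar (t i.succ) * (X (t i.succ) - X (t i.castSucc)))
          = X T * Sstar T - X 0 * Sstar 0 := by
        calc ∑ i : Fin n, (X (t i.castSucc) * (Sstar (t i.succ) - Sstar (t i.castSucc))
              + Sstar (t i.succ) * (X (t i.succ) - X (t i.castSucc)))
            = ∑ i : Fin n, (X (t i.succ) * Sstar (t i.succ)
                - X (t i.castSucc) * Sstar (t i.castSucc)) :=
              Finset.sum_congr rfl fun i _ => by ring
          _ = X T * Sstar T - X 0 * Sstar 0 := htelV
      rw [Finset.sum_add_distrib] at h2
      linarith
    -- per-interval estimates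
    have hE1 : ∀ i : Fin n,
        |Sstar (t i.succ) * (Xup (t i.succ) - Xup (t i.castSucc))
            - (Ydown (t i.succ) - Ydown (t i.castSucc))|
          ≤ ε / C * (Xup (t i.succ) - Xup (t i.castSucc)) := fun i =>
      stieltjes_riemann Xup Ydown B Sstar hScont.measurable hYd hXupsupp (hle i)
        (hSpos _) hε'.le (hclose i)
    have hE2 : ∀ i : Fin n,
        |Sstar (t i.succ) * (Xdown (t i.succ) - Xdown (t i.castSucc))
            - (Yup (t i.succ) - Yup (t i.castSucc))|
          ≤ ε / C * (Xdown (t i.succ) - Xdown (t i.castSucc)) := fun i =>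
      stieltjes_riemann Xdown Yup A Sstar hScont.measurable hYu hXdownsupp (hle i)
        (hSpos _) hε'.le (hclose i)
    have hE3 : ∀ i : Fin n,
        |∑ s ∈ J.filter (fun s => s ∈ Set.Ioc (t i.castSucc) (t i.succ)),
            (Sstar (t i.succ) - Sstar s) * Δx s|
          ≤ ε / C * ∑ s ∈ J.filter (fun s => s ∈ Set.Ioc (t i.castSucc) (t i.succ)),
              |Δx s| := by
      intro i
      refine le_trans (Finset.abs_sum_le_sum_abs _ _) ?_
      rw [Finset.mul_sum]
      refine Finset.sum_le_sum fun s hs => ?_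
      rw [abs_mul]
      refine mul_le_mul_of_nonneg_right ?_ (abs_nonneg _)
      rw [abs_sub_comm]
      exact hclose i s (Finset.mem_filter.1 hs).2
    -- telescopes
    have htelXup : ∑ i : Fin n, (Xup (t i.succ) - Xup (t i.castSucc))
        = Xup (t (Fin.last n)) - Xup (t 0) := fin_telescope n fun j => Xup (t j)
    rw [ht0, htT, hXup0', sub_zero] at htelXup
    have htelXdown : ∑ i : Fin n, (Xdown (t i.succ) - Xdown (t i.castSucc))
        = Xdown (t (Fin.last n)) - Xdown (t 0) := fin_telescope n fun j => Xdown (t j)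
    rw [ht0, htT, hXdown0', sub_zero] at htelXdown
    have htelYd : ∑ i : Fin n, (Ydown (t i.succ) - Ydown (t i.castSucc))
        = Ydown (t (Fin.last n)) - Ydown (t 0) := fin_telescope n fun j => Ydown (t j)
    rw [ht0, htT, hYdown0', sub_zero] at htelYd
    have htelYu : ∑ i : Fin n, (Yup (t i.succ) - Yup (t i.castSucc))
        = Yup (t (Fin.last n)) - Yup (t 0) := fin_telescope n fun j => Yup (t j)
    rw [ht0, htT, hYup0', sub_zero] at htelYu
    have htelGsx : ∑ i : Fin n, ((∑ s ∈ J.filter (· ≤ t i.succ), Sstar s * Δx s)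
          - ∑ s ∈ J.filter (· ≤ t i.castSucc), Sstar s * Δx s)
        = (∑ s ∈ J.filter (· ≤ t (Fin.last n)), Sstar s * Δx s)
          - ∑ s ∈ J.filter (· ≤ t 0), Sstar s * Δx s :=
      fin_telescope n fun j => ∑ s ∈ J.filter (· ≤ t j), Sstar s * Δx s
    rw [ht0, htT, hJT, hJ0, Finset.sum_empty, sub_zero] at htelGsx
    have hjtelAbs : ∑ i : Fin n, ∑ s ∈ J.filter
          (fun s => s ∈ Set.Ioc (t i.castSucc) (t i.succ)), |Δx s|
        = ∑ s ∈ J, |Δx s| := by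
      have h1 : ∀ i : Fin n, ∑ s ∈ J.filter
            (fun s => s ∈ Set.Ioc (t i.castSucc) (t i.succ)), |Δx s|
          = (∑ s ∈ J.filter (fun s => s ≤ t i.succ), |Δx s|)
            - ∑ s ∈ J.filter (fun s => s ≤ t i.castSucc), |Δx s| :=
        fun i => sum_filter_Ioc J (fun s => |Δx s|) (hle i)
      rw [Finset.sum_congr rfl fun i _ => h1 i]
      have h2 : ∑ i : Fin n, ((∑ s ∈ J.filter (fun s => s ≤ t i.succ), |Δx s|)
            - ∑ s ∈ J.filter (fun s => s ≤ t i.castSucc), |Δx s|)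
          = (∑ s ∈ J.filter (fun s => s ≤ t (Fin.last n)), |Δx s|)
            - ∑ s ∈ J.filter (fun s => s ≤ t 0), |Δx s| :=
        fin_telescope n fun j => ∑ s ∈ J.filter (fun s => s ≤ t j), |Δx s|
      rw [h2, ht0, htT, hJT, hJ0, Finset.sum_empty, sub_zero]
    -- sum bounds
    have hS1 : ∑ i : Fin n, |Sstar (t i.succ) * (Xup (t i.succ) - Xup (t i.castSucc))
          - (Ydown (t i.succ) - Ydown (t i.castSucc))| ≤ ε / C * Xup T :=
      calc ∑ i : Fin n, |Sstar (t i.succ) * (Xup (t i.succ) - Xup (t i.castSucc))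
              - (Ydown (t i.succ) - Ydown (t i.castSucc))|
          ≤ ∑ i : Fin n, ε / C * (Xup (t i.succ) - Xup (t i.castSucc)) :=
            Finset.sum_le_sum fun i _ => hE1 i
        _ = ε / C * Xup T := by rw [← Finset.mul_sum, htelXup]
    have hS2 : ∑ i : Fin n, |Sstar (t i.succ) * (Xdown (t i.succ) - Xdown (t i.castSucc))
          - (Yup (t i.succ) - Yup (t i.castSucc))| ≤ ε / C * Xdown T :=
      calc ∑ i : Fin n, |Sstar (t i.succ) * (Xdown (t i.succ) - Xdown (t i.castSucc))
              - (Yup (t i.succ) - Yup (t i.castSucc))|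
          ≤ ∑ i : Fin n, ε / C * (Xdown (t i.succ) - Xdown (t i.castSucc)) :=
            Finset.sum_le_sum fun i _ => hE2 i
        _ = ε / C * Xdown T := by rw [← Finset.mul_sum, htelXdown]
    have hS3 : ∑ i : Fin n, |∑ s ∈ J.filter
          (fun s => s ∈ Set.Ioc (t i.castSucc) (t i.succ)),
            (Sstar (t i.succ) - Sstar s) * Δx s| ≤ ε / C * ∑ s ∈ J, |Δx s| :=
      calc ∑ i : Fin n, |∑ s ∈ J.filter
              (fun s => s ∈ Set.Ioc (t i.castSucc) (t i.succ)),
              (Sstar (t i.succ) - Sstar s) * Δx s|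
          ≤ ∑ i : Fin n, ε / C * ∑ s ∈ J.filter
              (fun s => s ∈ Set.Ioc (t i.castSucc) (t i.succ)), |Δx s| :=
            Finset.sum_le_sum fun i _ => hE3 i
        _ = ε / C * ∑ s ∈ J, |Δx s| := by rw [← Finset.mul_sum, hjtelAbs]
    -- decomposition identity
    have hper : ∀ i : Fin n, Sstar (t i.succ) * (X (t i.succ) - X (t i.castSucc))
        = (Sstar (t i.succ) * (Xup (t i.succ) - Xup (t i.castSucc))
              - (Ydown (t i.succ) - Ydown (t i.castSucc)))
          - (Sstar (t i.succ) * (Xdown (t i.succ) - Xdown (t i.castSucc))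
              - (Yup (t i.succ) - Yup (t i.castSucc)))
          + (∑ s ∈ J.filter (fun s => s ∈ Set.Ioc (t i.castSucc) (t i.succ)),
              (Sstar (t i.succ) - Sstar s) * Δx s)
          + (Ydown (t i.succ) - Ydown (t i.castSucc))
          - (Yup (t i.succ) - Yup (t i.castSucc))
          + ((∑ s ∈ J.filter (· ≤ t i.succ), Sstar s * Δx s)
              - ∑ s ∈ J.filter (· ≤ t i.castSucc), Sstar s * Δx s) := by
      intro i
      have e1 : (∑ s ∈ J.filter (fun s => s ∈ Set.Ioc (t i.castSucc) (t i.succ)),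
            (Sstar (t i.succ) - Sstar s) * Δx s)
          = Sstar (t i.succ) * ((∑ s ∈ J.filter (· ≤ t i.succ), Δx s)
                - ∑ s ∈ J.filter (· ≤ t i.castSucc), Δx s)
            - ((∑ s ∈ J.filter (· ≤ t i.succ), Sstar s * Δx s)
                - ∑ s ∈ J.filter (· ≤ t i.castSucc), Sstar s * Δx s) := by
        rw [sum_filter_Ioc J (fun s => (Sstar (t i.succ) - Sstar s) * Δx s) (hle i)]
        have e2 : ∀ u : ℝ, ∑ s ∈ J.filter (fun s => s ≤ u),
              (Sstar (t i.succ) - Sstar s) * Δx s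
            = Sstar (t i.succ) * (∑ s ∈ J.filter (fun s => s ≤ u), Δx s)
              - ∑ s ∈ J.filter (fun s => s ≤ u), Sstar s * Δx s := by
          intro u
          rw [Finset.mul_sum, ← Finset.sum_sub_distrib]
          exact Finset.sum_congr rfl fun s _ => by ring
        rw [e2, e2]
        ring
      rw [e1, hX (t i.succ), hX (t i.castSucc)]
      ring
    have hEq : (∑ i : Fin n, Sstar (t i.succ) * (X (t i.succ) - X (t i.castSucc)))
        = (∑ i : Fin n, (Sstar (t i.succ) * (Xup (t i.succ) - Xup (t i.castSucc))
              - (Ydown (t i.succ) - Ydown (t i.castSucc))))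
          - (∑ i : Fin n, (Sstar (t i.succ) * (Xdown (t i.succ) - Xdown (t i.castSucc))
              - (Yup (t i.succ) - Yup (t i.castSucc))))
          + (∑ i : Fin n, ∑ s ∈ J.filter
              (fun s => s ∈ Set.Ioc (t i.castSucc) (t i.succ)),
              (Sstar (t i.succ) - Sstar s) * Δx s)
          + (Ydown T - Yup T + ∑ s ∈ J, Sstar s * Δx s) := by
      rw [Finset.sum_congr rfl fun i _ => hper i]
      simp only [Finset.sum_add_distrib, Finset.sum_sub_distrib] at htelYd htelYu htelGsx ⊢
      linarith [htelYd, htelYu, htelGsx]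
    -- conclusion
    have h4 : (∑ i : Fin n, X (t i.castSucc) * (Sstar (t i.succ) - Sstar (t i.castSucc))) - Lx
        = (Ydown T - Yup T + ∑ s ∈ J, Sstar s * Δx s)
          - ∑ i : Fin n, Sstar (t i.succ) * (X (t i.succ) - X (t i.castSucc)) := by
      rw [habel, hLx]; ring
    rw [h4, abs_sub_comm]
    have h5 : (∑ i : Fin n, Sstar (t i.succ) * (X (t i.succ) - X (t i.castSucc)))
          - (Ydown T - Yup T + ∑ s ∈ J, Sstar s * Δx s)
        = (∑ i : Fin n, (Sstar (t i.succ) * (Xup (t i.succ) - Xup (t i.castSucc))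
              - (Ydown (t i.succ) - Ydown (t i.castSucc))))
          - (∑ i : Fin n, (Sstar (t i.succ) * (Xdown (t i.succ) - Xdown (t i.castSucc))
              - (Yup (t i.succ) - Yup (t i.castSucc))))
          + (∑ i : Fin n, ∑ s ∈ J.filter
              (fun s => s ∈ Set.Ioc (t i.castSucc) (t i.succ)),
              (Sstar (t i.succ) - Sstar s) * Δx s) := by
      rw [hEq]; ring
    rw [h5]
    have a1 := (Finset.abs_sum_le_sum_abs _ _).trans hS1
    have a2 := (Finset.abs_sum_le_sum_abs _ _).trans hS2
    have a3 := (Finset.abs_sum_le_sum_abs _ _).trans hS3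
    have htri : |(∑ i : Fin n, (Sstar (t i.succ) * (Xup (t i.succ) - Xup (t i.castSucc))
              - (Ydown (t i.succ) - Ydown (t i.castSucc))))
          - (∑ i : Fin n, (Sstar (t i.succ) * (Xdown (t i.succ) - Xdown (t i.castSucc))
              - (Yup (t i.succ) - Yup (t i.castSucc))))
          + (∑ i : Fin n, ∑ s ∈ J.filter
              (fun s => s ∈ Set.Ioc (t i.castSucc) (t i.succ)),
              (Sstar (t i.succ) - Sstar s) * Δx s)|
        ≤ |∑ i : Fin n, (Sstar (t i.succ) * (Xup (t i.succ) - Xup (t i.castSucc))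
              - (Ydown (t i.succ) - Ydown (t i.castSucc)))|
          + |∑ i : Fin n, (Sstar (t i.succ) * (Xdown (t i.succ) - Xdown (t i.castSucc))
              - (Yup (t i.succ) - Yup (t i.castSucc)))|
          + |∑ i : Fin n, ∑ s ∈ J.filter
              (fun s => s ∈ Set.Ioc (t i.castSucc) (t i.succ)),
              (Sstar (t i.succ) - Sstar s) * Δx s| := by
      have t1 := abs_add_le ((∑ i : Fin n, (Sstar (t i.succ) * (Xup (t i.succ) - Xup (t i.castSucc))
              - (Ydown (t i.succ) - Ydown (t i.castSucc))))
          - (∑ i : Fin n, (Sstar (t i.succ) * (Xdown (t i.succ) - Xdown (t i.castSucc))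
              - (Yup (t i.succ) - Yup (t i.castSucc)))))
          (∑ i : Fin n, ∑ s ∈ J.filter
              (fun s => s ∈ Set.Ioc (t i.castSucc) (t i.succ)),
              (Sstar (t i.succ) - Sstar s) * Δx s)
      have t2 := abs_sub (∑ i : Fin n, (Sstar (t i.succ) * (Xup (t i.succ) - Xup (t i.castSucc))
              - (Ydown (t i.succ) - Ydown (t i.castSucc))))
          (∑ i : Fin n, (Sstar (t i.succ) * (Xdown (t i.succ) - Xdown (t i.castSucc))
              - (Yup (t i.succ) - Yup (t i.castSucc))))
      linarith
    have hfin : ε / C * Xup T + ε / C * Xdown T + ε / C * (∑ s ∈ J, |Δx s|) ≤ ε := by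
      have e : ε / C * C = ε := div_mul_cancel₀ ε hCpos.ne'
      have h6 : ε / C * (Xup T + Xdown T + (∑ s ∈ J, |Δx s|)) ≤ ε / C * C :=
        mul_le_mul_of_nonneg_left (by rw [hC]; linarith) hε'.le
      linarith
    linarith
  -- identify I with Lx
  have hIL : I = Lx := by
    by_contra hne
    have habs : 0 < |I - Lx| := abs_pos.2 (sub_ne_zero.2 hne)
    have hhalf : 0 < |I - Lx| / 2 := by linarith
    obtain ⟨δ₁, hδ₁, H1⟩ := hI (|I - Lx| / 2) hhalf
    obtain ⟨δ₂, hδ₂, H2⟩ := key (|I - Lx| / 2) hhalf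
    have hmin : 0 < min δ₁ δ₂ := lt_min hδ₁ hδ₂
    obtain ⟨m, hm⟩ := exists_nat_gt (T / min δ₁ δ₂)
    have hm0 : 0 < (m:ℝ) := lt_of_le_of_lt (div_nonneg hT hmin.le) hm
    set t : Fin (m+1) → ℝ := fun i => (i : ℕ) * T / m with htdef
    have hmono : Monotone t := by
      intro i j hij
      have hij' : ((i : ℕ) : ℝ) ≤ ((j : ℕ) : ℝ) := Nat.cast_le.2 hij
      have h1 : ((i:ℕ):ℝ) * T ≤ ((j:ℕ):ℝ) * T := mul_le_mul_of_nonneg_right hij' hT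
      exact div_le_div_of_nonneg_right h1 hm0.le
    have ht0 : t 0 = 0 := by simp [htdef]
    have htT : t (Fin.last m) = T := by
      rw [htdef]
      simp only [Fin.val_last]
      rw [mul_comm, mul_div_assoc, div_self hm0.ne', mul_one]
    have hmesh : ∀ i : Fin m, t i.succ - t i.castSucc < min δ₁ δ₂ := by
      intro i
      have heq : t i.succ - t i.castSucc = T / m := by
        rw [htdef]
        simp only [Fin.val_succ, Fin.coe_castSucc]
        push_cast
        ring
      rw [heq]
      have hTm : T < (m:ℝ) * min δ₁ δ₂ := (div_lt_iff₀ hmin).1 hm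
      rw [div_lt_iff₀ hm0]
      linarith
    have e1 := H1 m t hmono ht0 htT (fun i => lt_of_lt_of_le (hmesh i) (min_le_left _ _))
    have e2 := H2 m t hmono ht0 htT (fun i => lt_of_lt_of_le (hmesh i) (min_le_right _ _))
    have tri := abs_sub_le I
      (∑ i : Fin m, X (t i.castSucc) * (Sstar (t i.succ) - Sstar (t i.castSucc))) Lx
    rw [abs_sub_comm I
      (∑ i : Fin m, X (t i.castSucc) * (Sstar (t i.succ) - Sstar (t i.castSucc)))] at tri
    linarith
  -- final assembly
  have hterm : ∀ s ∈ J, 0 ≤ Δy s + Sstar s * Δx s := by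
    intro s hs
    have hsplitx : ∑ s' ∈ J.filter (· ≤ s), Δx s' = (∑ s' ∈ J.filter (· < s), Δx s') + Δx s := by
      have hins : J.filter (· ≤ s) = insert s (J.filter (· < s)) := by
        ext u
        simp only [Finset.mem_filter, Finset.mem_insert]
        constructor
        · rintro ⟨hu, hus⟩
          rcases eq_or_lt_of_le hus with h1 | h1
          · exact Or.inl h1
          · exact Or.inr ⟨hu, h1⟩
        · rintro (rfl | ⟨hu, hus⟩)
          · exact ⟨hs, le_rfl⟩
          · exact ⟨hu, hus.le⟩
      rw [hins, Finset.sum_insert (by simp)]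
      ring
    have hsplity : ∑ s' ∈ J.filter (· ≤ s), Δy s' = (∑ s' ∈ J.filter (· < s), Δy s') + Δy s := by
      have hins : J.filter (· ≤ s) = insert s (J.filter (· < s)) := by
        ext u
        simp only [Finset.mem_filter, Finset.mem_insert]
        constructor
        · rintro ⟨hu, hus⟩
          rcases eq_or_lt_of_le hus with h1 | h1
          · exact Or.inl h1
          · exact Or.inr ⟨hu, h1⟩
        · rintro (rfl | ⟨hu, hus⟩)
          · exact ⟨hs, le_rfl⟩
          · exact ⟨hu, hus.le⟩
      rw [hins, Finset.sum_insert (by simp)]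
      ring
    have hXs : X s = Xleft s + Δx s := by
      rw [hX s, hXleft s, hsplitx]; ring
    have hYs : Y s = Yleft s + Δy s := by
      rw [hY s, hYleft s, hsplity]; ring
    exact jump_ineq α τ β (Xleft s) (Yleft s) (Δx s) (Δy s) (Sstar s) hα hτ hβ
      (hXleftpos s) (hYleftpos s)
      (by rw [← hXs]; exact hXpos s) (by rw [← hYs]; exact hYpos s)
      (hjump s hs).1 (hNAjump s hs).1 (hNAjump s hs).2 (hjump s hs).2
  have hYT' : Y T = y₀ + Yup T - Ydown T + ∑ s ∈ J, Δy s := by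
    rw [hY T, hJT]
  have hY0' : Y 0 = y₀ := by
    rw [hY 0, hJ0, Finset.sum_empty, hYup0', hYdown0']; ring
  constructor
  · have hsums : 0 ≤ ∑ s ∈ J, (Δy s + Sstar s * Δx s) :=
      Finset.sum_nonneg fun s hs => hterm s hs
    rw [Finset.sum_add_distrib] at hsums
    rw [hIL, hLx, hYT', hY0']
    linarith
  · intro hJe
    have hsum0 : ∑ s ∈ J, Sstar s * Δx s = 0 := by rw [hJe]; simp
    have hsumy : ∑ s ∈ J, Δy s = 0 := by rw [hJe]; simp
    rw [hIL, hLx, hYT', hY0']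
    linarith
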